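/- arXiv:2311.09465 — 2 statements merged into one kernel-verified Lean document; each statement's English description precedes it below -/
import Mathlib

section
/- (Stability of the GLS form, one-dimensional Dirichlet case.) Let N ≥ 1, ω ∈ ℝ, M = 2N−1, let Ω be the time-derivative matrix, let u : ℤ → ℂ satisfy u_{−k} = conj(u_k) and u_k = 0 for |k| ≥ N with convolution matrix A, let κ > 0, L > 0, and let τ : [0,L] → ℂ^{M×M} be continuous with τ(x) Hermitian positive semidefinite for every x ∈ [0,L]. Suppose w : ℝ → ℂ^M is twice continuously differentiable on [0,L], satisfies w(0) = w(L) = 0, and is pointwise conjugate-symmetric, i.e. w_{−n}(x) = conj(w_n(x)) for all n and x. Define the residual r(x) := Ω w(x) + A w′(x) − κ w″(x) and the GLS form b(w,w) := ∫₀^L [w^H Ω w + w^H A w′ + κ·w′^H w′ + r^H τ r] dx. Then b(w,w) = κ ∫₀^L ‖w′(x)‖² dx + ∫₀^L r(x)^H τ(x) r(x) dx; in particular b(w,w) is a nonnegative real number. -/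
open Matrix ComplexOrder

/-- The time-derivative matrix `Ω` of size `2N-1`, indexed by `n = i - (N-1)` for
`i : Fin (2N-1)`, with diagonal entries `i·n·ω`. -/
noncomputable def timeDerivMat (N : ℕ) (ω : ℝ) :
    Matrix (Fin (2 * N - 1)) (Fin (2 * N - 1)) ℂ :=
  Matrix.diagonal fun i => Complex.I * (((i.val : ℤ) - ((N : ℤ) - 1) : ℤ) : ℂ) * (ω : ℂ)

/-- The convolution matrix `A` with entries `A_{mn} = u_{m-n}`. -/
noncomputable def convMat (N : ℕ) (u : ℤ → ℂ) :
    Matrix (Fin (2 * N - 1)) (Fin (2 * N - 1)) ℂ :=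
  fun i j => u ((i.val : ℤ) - (j.val : ℤ))

/-- The residual `r = Ω w + A w' − κ w''` of the 1D time-spectral
convection–diffusion operator. -/
noncomputable def glsResidual (N : ℕ) (ω : ℝ) (u : ℤ → ℂ) (κ : ℝ)
    (w w' w'' : ℝ → Fin (2 * N - 1) → ℂ) (x : ℝ) : Fin (2 * N - 1) → ℂ :=
  (timeDerivMat N ω).mulVec (w x) + (convMat N u).mulVec (w' x) - (κ : ℂ) • w'' x

/-- The GLS form `b(w,w) = ∫₀^L [w^H Ω w + w^H A w' + κ w'^H w' + r^H τ r] dx`. -/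
noncomputable def glsForm (N : ℕ) (ω : ℝ) (u : ℤ → ℂ) (κ L : ℝ)
    (τ : ℝ → Matrix (Fin (2 * N - 1)) (Fin (2 * N - 1)) ℂ)
    (w w' w'' : ℝ → Fin (2 * N - 1) → ℂ) : ℂ :=
  ∫ x in (0 : ℝ)..L,
    (star (w x) ⬝ᵥ (timeDerivMat N ω).mulVec (w x)
      + star (w x) ⬝ᵥ (convMat N u).mulVec (w' x)
      + (κ : ℂ) * (star (w' x) ⬝ᵥ w' x)
      + star (glsResidual N ω u κ w w' w'' x) ⬝ᵥ
          (τ x).mulVec (glsResidual N ω u κ w w' w'' x))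

lemma star_mul_self_eq (z : ℂ) : star z * z = ((‖z‖ ^ 2 : ℝ) : ℂ) := by
  rw [Complex.star_def, mul_comm, Complex.mul_conj, Complex.sq_norm]

lemma contOn_dot {M : ℕ} {s : Set ℝ} {g h : ℝ → Fin M → ℂ}
    (hg : ContinuousOn g s) (hh : ContinuousOn h s) :
    ContinuousOn (fun x => g x ⬝ᵥ h x) s := by
  simp only [dotProduct]
  exact continuousOn_finset_sum _ fun i _ =>
    ((continuous_apply i).comp_continuousOn hg).mul ((continuous_apply i).comp_continuousOn hh)

lemma contOn_mulVec {M : ℕ} {s : Set ℝ} {τ : ℝ → Matrix (Fin M) (Fin M) ℂ} {g : ℝ → Fin M → ℂ}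
    (hτ : ContinuousOn τ s) (hg : ContinuousOn g s) :
    ContinuousOn (fun x => (τ x).mulVec (g x)) s := by
  rw [continuousOn_pi]
  intro i
  simp only [Matrix.mulVec, dotProduct]
  refine continuousOn_finset_sum _ fun j _ => ContinuousOn.mul ?_
    ((continuous_apply j).comp_continuousOn hg)
  exact ((continuous_apply j).comp (continuous_apply i)).comp_continuousOn hτ

lemma rev_cast {N : ℕ} (hN : 1 ≤ N) (i : Fin (2 * N - 1)) :
    ((Fin.rev i).val : ℤ) = 2 * N - 2 - i.val := by
  have h := i.isLt
  rw [Fin.val_rev]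
  omega

lemma omega_term_zero {N : ℕ} (hN : 1 ≤ N) (ω : ℝ) (v : Fin (2 * N - 1) → ℂ)
    (hv : ∀ i, v (Fin.rev i) = starRingEnd ℂ (v i)) :
    star v ⬝ᵥ (timeDerivMat N ω).mulVec v = 0 := by
  set f : Fin (2 * N - 1) → ℂ := fun i =>
    starRingEnd ℂ (v i) * (Complex.I * (((i.val : ℤ) - ((N : ℤ) - 1) : ℤ) : ℂ) * (ω : ℂ) * v i)
    with hf
  have hS : star v ⬝ᵥ (timeDerivMat N ω).mulVec v = ∑ i, f i := by
    simp [timeDerivMat, dotProduct, Matrix.mulVec_diagonal, hf]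
  have key : ∑ i, f i = ∑ i, (- f i) := by
    refine Fintype.sum_bijective Fin.rev Fin.rev_involutive.bijective _ _ ?_
    intro i
    have h2 : ((((Fin.rev i).val : ℤ) - ((N : ℤ) - 1) : ℤ) : ℂ)
        = -(((i.val : ℤ) - ((N : ℤ) - 1) : ℤ) : ℂ) := by
      have hz : (((Fin.rev i).val : ℤ) - ((N : ℤ) - 1))
          = -((i.val : ℤ) - ((N : ℤ) - 1)) := by
        rw [rev_cast hN i]; have := i.isLt; omega
      rw [hz, Int.cast_neg]
    simp only [hf, hv i, h2, Complex.conj_conj]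
    ring
  have hzero : ∑ i, f i = 0 := by
    have h2 : (∑ i, f i) + (∑ i, f i) = 0 := by
      nth_rewrite 2 [key]
      rw [← Finset.sum_add_distrib]
      simp
    exact add_self_eq_zero.mp h2
  rw [hS, hzero]

lemma conv_term_symm {N : ℕ} (hN : 1 ≤ N) (u : ℤ → ℂ)
    (v v' : Fin (2 * N - 1) → ℂ)
    (hv : ∀ i, v (Fin.rev i) = starRingEnd ℂ (v i))
    (hv' : ∀ i, v' (Fin.rev i) = starRingEnd ℂ (v' i)) :
    star v' ⬝ᵥ (convMat N u).mulVec v = star v ⬝ᵥ (convMat N u).mulVec v' := by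
  have expand : ∀ (a b : Fin (2 * N - 1) → ℂ),
      star a ⬝ᵥ (convMat N u).mulVec b
        = ∑ p : Fin (2 * N - 1) × Fin (2 * N - 1),
            starRingEnd ℂ (a p.1) * u ((p.1.val : ℤ) - (p.2.val : ℤ)) * b p.2 := by
    intro a b
    rw [Fintype.sum_prod_type]
    simp [dotProduct, mulVec, convMat, Finset.mul_sum, mul_assoc]
  rw [expand, expand]
  refine Fintype.sum_equiv
    ((Equiv.prodComm _ _).trans (Fin.revPerm.prodCongr Fin.revPerm)) _ _ ?_
  rintro ⟨i, j⟩
  simp only [Equiv.trans_apply, Equiv.prodComm_apply, Prod.swap_prod_mk,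
    Equiv.prodCongr_apply, Prod.map_apply, Fin.revPerm_apply]
  have hu' : ((Fin.rev j).val : ℤ) - ((Fin.rev i).val : ℤ)
      = (i.val : ℤ) - (j.val : ℤ) := by
    rw [rev_cast hN, rev_cast hN]
    have := i.isLt; have := j.isLt; omega
  rw [hu', hv j, hv' i, Complex.conj_conj]
  ring

lemma hasDeriv_quadform {N : ℕ} (u : ℤ → ℂ) {w : ℝ → Fin (2 * N - 1) → ℂ}
    {W' : Fin (2 * N - 1) → ℂ} {s : Set ℝ} {x : ℝ}
    (hw : HasDerivWithinAt w W' s x) :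
    HasDerivWithinAt (fun t => star (w t) ⬝ᵥ (convMat N u).mulVec (w t))
      (star W' ⬝ᵥ (convMat N u).mulVec (w x)
        + star (w x) ⬝ᵥ (convMat N u).mulVec W') s x := by
  have hcomp : ∀ i, HasDerivWithinAt (fun t => w t i) (W' i) s x :=
    fun i => hasDerivWithinAt_pi.mp hw i
  have hterm : ∀ (i j : Fin (2 * N - 1)), HasDerivWithinAt
      (fun t => star (w t i) * (u ((i.val : ℤ) - (j.val : ℤ)) * w t j))
      (star (W' i) * (u ((i.val : ℤ) - (j.val : ℤ)) * w x j)
        + star (w x i) * (u ((i.val : ℤ) - (j.val : ℤ)) * W' j)) s x := by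
    intro i j
    exact ((hcomp i).star).mul ((hcomp j).const_mul _)
  have hsum : HasDerivWithinAt
      (fun t => ∑ i, ∑ j, star (w t i) * (u ((i.val : ℤ) - (j.val : ℤ)) * w t j))
      (∑ i, ∑ j, (star (W' i) * (u ((i.val : ℤ) - (j.val : ℤ)) * w x j)
        + star (w x i) * (u ((i.val : ℤ) - (j.val : ℤ)) * W' j))) s x := by
    refine HasDerivWithinAt.fun_sum fun i _ => HasDerivWithinAt.fun_sum fun j _ => hterm i j
  have heq : (fun t => ∑ i, ∑ j, star (w t i) * (u ((i.val : ℤ) - (j.val : ℤ)) * w t j))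
      = fun t => star (w t) ⬝ᵥ (convMat N u).mulVec (w t) := by
    funext t
    simp [dotProduct, mulVec, convMat, Finset.mul_sum]
  have heq2 : (∑ i, ∑ j, (star (W' i) * (u ((i.val : ℤ) - (j.val : ℤ)) * w x j)
        + star (w x i) * (u ((i.val : ℤ) - (j.val : ℤ)) * W' j)))
      = star W' ⬝ᵥ (convMat N u).mulVec (w x) + star (w x) ⬝ᵥ (convMat N u).mulVec W' := by
    simp [dotProduct, mulVec, convMat, Finset.mul_sum, Finset.sum_add_distrib]
  rw [← heq, ← heq2]
  exact hsum

/-- (Stability of the GLS form, one-dimensional Dirichlet case.)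
For a conjugate-symmetric, twice continuously differentiable `w` vanishing at `0` and `L`,
and pointwise Hermitian positive semidefinite `τ`,
`b(w,w) = κ ∫₀^L ‖w'‖² + ∫₀^L r^H τ r`; in particular `b(w,w)` is a nonnegative real. -/
theorem stmt_3 (N : ℕ) (hN : 1 ≤ N) (ω : ℝ)
    (u : ℤ → ℂ) (hu : ∀ k : ℤ, u (-k) = starRingEnd ℂ (u k))
    (hu0 : ∀ k : ℤ, (N : ℤ) ≤ |k| → u k = 0)
    (κ L : ℝ) (hκ : 0 < κ) (hL : 0 < L)
    (τ : ℝ → Matrix (Fin (2 * N - 1)) (Fin (2 * N - 1)) ℂ)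
    (hτcont : ContinuousOn τ (Set.Icc 0 L))
    (hτ : ∀ x ∈ Set.Icc (0 : ℝ) L, (τ x).PosSemidef)
    (w w' w'' : ℝ → Fin (2 * N - 1) → ℂ)
    (hw1 : ∀ x ∈ Set.Icc (0 : ℝ) L, HasDerivWithinAt w (w' x) (Set.Icc 0 L) x)
    (hw2 : ∀ x ∈ Set.Icc (0 : ℝ) L, HasDerivWithinAt w' (w'' x) (Set.Icc 0 L) x)
    (hw''cont : ContinuousOn w'' (Set.Icc 0 L))
    (hw0 : w 0 = 0) (hwL : w L = 0)
    (hsym : ∀ x : ℝ, ∀ i, w x (Fin.rev i) = starRingEnd ℂ (w x i)) :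
    glsForm N ω u κ L τ w w' w''
        = ((κ * ∫ x in (0 : ℝ)..L, ∑ i, ‖w' x i‖ ^ 2 : ℝ) : ℂ)
          + ∫ x in (0 : ℝ)..L,
              star (glsResidual N ω u κ w w' w'' x) ⬝ᵥ
                (τ x).mulVec (glsResidual N ω u κ w w' w'' x) ∧
      (glsForm N ω u κ L τ w w' w'').im = 0 ∧
      0 ≤ (glsForm N ω u κ L τ w w' w'').re := by
  have huIcc : Set.uIcc (0 : ℝ) L = Set.Icc 0 L := Set.uIcc_of_le hL.le
  -- continuity of w, w'
  have hwc : ContinuousOn w (Set.Icc 0 L) := fun x hx => (hw1 x hx).continuousWithinAt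
  have hw'c : ContinuousOn w' (Set.Icc 0 L) := fun x hx => (hw2 x hx).continuousWithinAt
  -- conjugate symmetry of w'
  have hsym' : ∀ x ∈ Set.Icc (0 : ℝ) L, ∀ i,
      w' x (Fin.rev i) = starRingEnd ℂ (w' x i) := by
    intro x hx i
    have hu1 : HasDerivWithinAt (fun t => w t (Fin.rev i)) (w' x (Fin.rev i))
        (Set.Icc 0 L) x := hasDerivWithinAt_pi.mp (hw1 x hx) (Fin.rev i)
    have hu2 : HasDerivWithinAt (fun t => w t (Fin.rev i)) (starRingEnd ℂ (w' x i))
        (Set.Icc 0 L) x := by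
      have h := (hasDerivWithinAt_pi.mp (hw1 x hx) i).star
      have heq : (fun t => star (w t i)) = fun t => w t (Fin.rev i) := by
        funext t; rw [hsym t i]; rfl
      rw [heq] at h
      exact h
    have hud : UniqueDiffWithinAt ℝ (Set.Icc (0 : ℝ) L) x := (uniqueDiffOn_Icc hL) x hx
    rw [← hu1.derivWithin hud, ← hu2.derivWithin hud]
  -- abbreviations
  set A := convMat N u with hA
  set r : ℝ → Fin (2 * N - 1) → ℂ := glsResidual N ω u κ w w' w'' with hr
  set T2 : ℝ → ℂ := fun x => star (w x) ⬝ᵥ A.mulVec (w' x) with hT2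
  set T3r : ℝ → ℝ := fun x => κ * ∑ i, ‖w' x i‖ ^ 2 with hT3r
  set T4 : ℝ → ℂ := fun x => star (r x) ⬝ᵥ (τ x).mulVec (r x) with hT4
  -- pointwise simplification of integrand
  have hInt : (fun x => star (w x) ⬝ᵥ (timeDerivMat N ω).mulVec (w x)
      + star (w x) ⬝ᵥ A.mulVec (w' x)
      + (κ : ℂ) * (star (w' x) ⬝ᵥ w' x)
      + star (r x) ⬝ᵥ (τ x).mulVec (r x))
      = fun x => T2 x + ((T3r x : ℝ) : ℂ) + T4 x := by
    funext x
    have h1 : star (w x) ⬝ᵥ (timeDerivMat N ω).mulVec (w x) = 0 :=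
      omega_term_zero hN ω (w x) (hsym x)
    have h3 : (κ : ℂ) * (star (w' x) ⬝ᵥ w' x) = ((T3r x : ℝ) : ℂ) := by
      have : star (w' x) ⬝ᵥ w' x = ((∑ i, ‖w' x i‖ ^ 2 : ℝ) : ℂ) := by
        simp only [dotProduct, Pi.star_apply]
        push_cast
        exact Finset.sum_congr rfl fun i _ => by exact_mod_cast star_mul_self_eq _
      rw [this, hT3r]
      push_cast
      ring
    rw [h1, h3]
    ring
  -- continuity helpers
  have hrc : ContinuousOn r (Set.Icc 0 L) := by
    rw [hr]
    unfold glsResidual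
    exact ((contOn_mulVec continuousOn_const hwc).add
      (contOn_mulVec continuousOn_const hw'c)).sub (by exact hw''cont.const_smul (κ : ℂ))
  have hT2c : ContinuousOn T2 (Set.Icc 0 L) :=
    contOn_dot hwc.star (contOn_mulVec continuousOn_const hw'c)
  have hT3c : ContinuousOn (fun x => ((T3r x : ℝ) : ℂ)) (Set.Icc 0 L) := by
    refine Complex.continuous_ofReal.comp_continuousOn ?_
    refine (continuousOn_const.mul (continuousOn_finset_sum _ fun i _ => ?_))
    exact (((continuous_apply i).comp_continuousOn hw'c).norm.pow 2)
  have hT4c : ContinuousOn T4 (Set.Icc 0 L) :=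
    contOn_dot hrc.star (contOn_mulVec hτcont hrc)
  have hT2i : IntervalIntegrable T2 MeasureTheory.volume 0 L := by
    rw [← huIcc] at hT2c; exact hT2c.intervalIntegrable
  have hT3i : IntervalIntegrable (fun x => ((T3r x : ℝ) : ℂ)) MeasureTheory.volume 0 L := by
    rw [← huIcc] at hT3c; exact hT3c.intervalIntegrable
  have hT4i : IntervalIntegrable T4 MeasureTheory.volume 0 L := by
    rw [← huIcc] at hT4c; exact hT4c.intervalIntegrable
  -- split the integral
  have hsplit : glsForm N ω u κ L τ w w' w''
      = (∫ x in (0:ℝ)..L, T2 x) + (∫ x in (0:ℝ)..L, ((T3r x : ℝ) : ℂ))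
        + (∫ x in (0:ℝ)..L, T4 x) := by
    rw [glsForm]
    calc ∫ x in (0:ℝ)..L, (star (w x) ⬝ᵥ (timeDerivMat N ω).mulVec (w x)
          + star (w x) ⬝ᵥ A.mulVec (w' x)
          + (κ : ℂ) * (star (w' x) ⬝ᵥ w' x)
          + star (r x) ⬝ᵥ (τ x).mulVec (r x))
        = ∫ x in (0:ℝ)..L, (T2 x + ((T3r x : ℝ) : ℂ) + T4 x) := by rw [hInt]
      _ = (∫ x in (0:ℝ)..L, T2 x) + (∫ x in (0:ℝ)..L, ((T3r x : ℝ) : ℂ))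
            + (∫ x in (0:ℝ)..L, T4 x) := by
          rw [intervalIntegral.integral_add (hT2i.add hT3i) hT4i,
            intervalIntegral.integral_add hT2i hT3i]
  -- ∫ T2 = 0
  have hT2zero : (∫ x in (0:ℝ)..L, T2 x) = 0 := by
    set f : ℝ → ℂ := fun x => star (w x) ⬝ᵥ A.mulVec (w x) with hfdef
    set F : ℝ → ℂ := fun x => star (w' x) ⬝ᵥ A.mulVec (w x) + star (w x) ⬝ᵥ A.mulVec (w' x)
      with hFdef
    have hFc : ContinuousOn F (Set.Icc 0 L) :=
      (contOn_dot hw'c.star (contOn_mulVec continuousOn_const hwc)).add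
        (contOn_dot hwc.star (contOn_mulVec continuousOn_const hw'c))
    have hFi : IntervalIntegrable F MeasureTheory.volume 0 L := by
      rw [← huIcc] at hFc; exact hFc.intervalIntegrable
    have hfc : ContinuousOn f (Set.Icc 0 L) :=
      contOn_dot hwc.star (contOn_mulVec continuousOn_const hwc)
    have hFTC : (∫ x in (0:ℝ)..L, F x) = f L - f 0 := by
      refine intervalIntegral.integral_eq_sub_of_hasDeriv_right_of_le hL.le hfc ?_ hFi
      intro x hx
      have h := hasDeriv_quadform u (hw1 x (Set.mem_Icc.mpr ⟨hx.1.le, hx.2.le⟩))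
      exact (h.hasDerivAt (Icc_mem_nhds hx.1 hx.2)).hasDerivWithinAt
    have hf0 : f 0 = 0 := by simp [hfdef, hw0]
    have hfL : f L = 0 := by simp [hfdef, hwL]
    have hFeq : Set.EqOn F (fun x => 2 * T2 x) (Set.uIcc 0 L) := by
      rw [huIcc]
      intro x hx
      have := conv_term_symm hN u (w x) (w' x) (hsym x) (hsym' x hx)
      simp only [hFdef, hT2]
      rw [← hA] at this
      rw [this]
      ring
    have h2 : (∫ x in (0:ℝ)..L, 2 * T2 x) = 0 := by
      rw [← intervalIntegral.integral_congr hFeq, hFTC, hf0, hfL, sub_zero]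
    rw [intervalIntegral.integral_const_mul] at h2
    have h2ne : (2 : ℂ) ≠ 0 := two_ne_zero
    exact (mul_eq_zero.mp h2).resolve_left h2ne
  -- ∫ ofReal T3r
  have hT3val : (∫ x in (0:ℝ)..L, ((T3r x : ℝ) : ℂ))
      = ((κ * ∫ x in (0 : ℝ)..L, ∑ i, ‖w' x i‖ ^ 2 : ℝ) : ℂ) := by
    rw [intervalIntegral.integral_ofReal]
    norm_cast
    rw [hT3r]
    rw [intervalIntegral.integral_const_mul]
  -- ∫ T4 is a nonneg real
  have hT4nonneg : ∀ x ∈ Set.Icc (0:ℝ) L, 0 ≤ (T4 x).re ∧ (T4 x).im = 0 := by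
    intro x hx
    have := (hτ x hx).dotProduct_mulVec_nonneg (r x)
    obtain ⟨h1, h2⟩ := Complex.nonneg_iff.mp this
    exact ⟨h1, h2.symm⟩
  have hT4eq : Set.EqOn T4 (fun x => (((T4 x).re : ℝ) : ℂ)) (Set.uIcc 0 L) := by
    rw [huIcc]
    intro x hx
    have := (hT4nonneg x hx).2
    exact Complex.ext (by simp) (by simp [this])
  have hT4val : (∫ x in (0:ℝ)..L, T4 x)
      = ((∫ x in (0:ℝ)..L, (T4 x).re : ℝ) : ℂ) := by
    rw [intervalIntegral.integral_congr hT4eq, intervalIntegral.integral_ofReal]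
  have hT4re_nonneg : 0 ≤ (∫ x in (0:ℝ)..L, (T4 x).re : ℝ) :=
    intervalIntegral.integral_nonneg hL.le fun x hx => (hT4nonneg x hx).1
  have hI3nonneg : 0 ≤ (∫ x in (0 : ℝ)..L, ∑ i, ‖w' x i‖ ^ 2 : ℝ) :=
    intervalIntegral.integral_nonneg hL.le fun x _ =>
      Finset.sum_nonneg fun i _ => sq_nonneg _
  -- conclude
  have hmain : glsForm N ω u κ L τ w w' w''
      = ((κ * ∫ x in (0 : ℝ)..L, ∑ i, ‖w' x i‖ ^ 2 : ℝ) : ℂ)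
        + ∫ x in (0:ℝ)..L, T4 x := by
    rw [hsplit, hT2zero, hT3val, zero_add]
  refine ⟨hmain, ?_, ?_⟩
  · rw [hmain, hT4val, ← Complex.ofReal_add, Complex.ofReal_im]
  · rw [hmain, hT4val, ← Complex.ofReal_add, Complex.ofReal_re]
    exact add_nonneg (mul_nonneg hκ.le hI3nonneg) hT4re_nonneg
end

section
/- Let M ≥ 1, let S ∈ ℂ^{M×M} be Hermitian positive semidefinite, let c > 0, and let τ be the unique positive semidefinite square root of (S + c·I)⁻¹. Then S·τ = τ·S, the matrix S·τ is Hermitian positive semidefinite, and S^{1/2} − S·τ is positive semidefinite, i.e. S·τ ⪯ S^{1/2} in the Loewner order, where S^{1/2} is the unique positive semidefinite square root of S. -/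
open Matrix ComplexOrder

namespace Matrix.PosSemidef

variable {n : Type*} [Fintype n] [DecidableEq n]

/-- The square root of a PSD matrix, via its spectral decomposition. -/
noncomputable def sqrt {A : Matrix n n ℂ} (hA : A.PosSemidef) : Matrix n n ℂ :=
  (hA.1.eigenvectorUnitary : Matrix n n ℂ) * diagonal ((↑) ∘ Real.sqrt ∘ hA.1.eigenvalues) *
    star (hA.1.eigenvectorUnitary : Matrix n n ℂ)

lemma sqrt_mul_self {A : Matrix n n ℂ} (hA : A.PosSemidef) : hA.sqrt * hA.sqrt = A := by
  have hU1 : star (hA.1.eigenvectorUnitary : Matrix n n ℂ) * hA.1.eigenvectorUnitary = 1 :=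
    (Matrix.mem_unitaryGroup_iff').mp hA.1.eigenvectorUnitary.2
  have hspec : A = (hA.1.eigenvectorUnitary : Matrix n n ℂ) *
      diagonal (RCLike.ofReal ∘ hA.1.eigenvalues) *
      star (hA.1.eigenvectorUnitary : Matrix n n ℂ) := hA.1.spectral_theorem
  have hd : diagonal ((↑) ∘ Real.sqrt ∘ hA.1.eigenvalues) *
      diagonal ((↑) ∘ Real.sqrt ∘ hA.1.eigenvalues) =
      diagonal (RCLike.ofReal ∘ hA.1.eigenvalues : n → ℂ) := by
    rw [diagonal_mul_diagonal]
    congr 1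
    funext i
    simp only [Function.comp_apply]
    rw [← Complex.ofReal_mul, Real.mul_self_sqrt (hA.eigenvalues_nonneg i)]
    rfl
  conv_rhs => rw [hspec]
  unfold sqrt
  simp only [Matrix.mul_assoc]
  rw [← Matrix.mul_assoc (star _) _ _, hU1,
    Matrix.one_mul, ← Matrix.mul_assoc (diagonal _) (diagonal _), hd]

lemma posSemidef_sqrt {A : Matrix n n ℂ} (hA : A.PosSemidef) : hA.sqrt.PosSemidef := by
  have hD : (diagonal ((↑) ∘ Real.sqrt ∘ hA.1.eigenvalues : n → ℂ)).PosSemidef := by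
    rw [posSemidef_diagonal_iff]
    intro i
    simp only [Function.comp_apply]
    exact_mod_cast Real.sqrt_nonneg _
  have := hD.mul_mul_conjTranspose_same (hA.1.eigenvectorUnitary : Matrix n n ℂ)
  exact this

lemma eq_sqrt_of_sq_eq {A B : Matrix n n ℂ} (hB : B.PosSemidef) (hA : A.PosSemidef)
    (h : B ^ 2 = A) : B = hA.sqrt := by
  open scoped MatrixOrder in
  have h1 : CFC.sqrt A = B := (CFC.sqrt_eq_iff A B hA.nonneg hB.nonneg).mpr (by rw [← h, sq])
  open scoped MatrixOrder in
  have h2 : CFC.sqrt A = hA.sqrt :=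
    (CFC.sqrt_eq_iff A hA.sqrt hA.nonneg hA.posSemidef_sqrt.nonneg).mpr hA.sqrt_mul_self
  rw [← h1, h2]

end Matrix.PosSemidef

section Aux

variable {n : Type*} [Fintype n] [DecidableEq n]

/-- Anything commuting with a PSD matrix commutes with its square root. -/
lemma aux_commute_sqrt {A B : Matrix n n ℂ} (hA : A.PosSemidef)
    (h : B * A = A * B) : B * hA.sqrt = hA.sqrt * B := by
  set U : Matrix n n ℂ := (hA.1.eigenvectorUnitary : Matrix n n ℂ) with hUdef
  have hU1 : star U * U = 1 := (Matrix.mem_unitaryGroup_iff').mp hA.1.eigenvectorUnitary.2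
  have hU2 : U * star U = 1 := (Matrix.mem_unitaryGroup_iff).mp hA.1.eigenvectorUnitary.2
  have cancel2 : ∀ Y : Matrix n n ℂ, U * (star U * Y) = Y := fun Y => by
    rw [← Matrix.mul_assoc, hU2, Matrix.one_mul]
  set d : n → ℂ := (RCLike.ofReal ∘ hA.1.eigenvalues) with hddef
  set e : n → ℂ := ((↑) ∘ Real.sqrt ∘ hA.1.eigenvalues) with hedef
  set C : Matrix n n ℂ := star U * B * U with hCdef
  have hspec : A = U * Matrix.diagonal d * star U := hA.1.spectral_theorem
  have e1 : A * U = U * Matrix.diagonal d := by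
    rw [hspec, Matrix.mul_assoc, Matrix.mul_assoc, hU1, Matrix.mul_one]
  have e2 : star U * A = Matrix.diagonal d * star U := by
    rw [hspec, ← Matrix.mul_assoc, ← Matrix.mul_assoc, hU1, Matrix.one_mul]
  have hCD : C * Matrix.diagonal d = Matrix.diagonal d * C := by
    calc C * Matrix.diagonal d
        = star U * B * (A * U) := by rw [hCdef, Matrix.mul_assoc, ← e1]
      _ = star U * (B * A) * U := by simp only [Matrix.mul_assoc]
      _ = star U * (A * B) * U := by rw [h]
      _ = Matrix.diagonal d * C := by
          rw [hCdef, ← Matrix.mul_assoc (star U) A B, e2]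
          simp only [Matrix.mul_assoc]
  have hCE : C * Matrix.diagonal e = Matrix.diagonal e * C := by
    ext i j
    rw [Matrix.mul_diagonal, Matrix.diagonal_mul]
    rcases eq_or_ne (C i j) 0 with h0 | h0
    · simp [h0]
    · have hthis : C i j * d j = d i * C i j := by
        have := congrFun (congrFun hCD i) j
        rwa [Matrix.mul_diagonal, Matrix.diagonal_mul] at this
      have hd : d i = d j :=
        (mul_left_cancel₀ h0 (hthis.trans (mul_comm _ _))).symm
      have heig : hA.1.eigenvalues i = hA.1.eigenvalues j := by
        have := hd
        simp only [hddef, Function.comp_apply] at this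
        exact_mod_cast this
      simp only [hedef, Function.comp_apply, heig, mul_comm]
  have hsqrt : hA.sqrt = U * Matrix.diagonal e * star U := rfl
  have step1 : U * (C * Matrix.diagonal e) * star U
      = B * (U * Matrix.diagonal e * star U) := by
    rw [hCdef]
    simp only [Matrix.mul_assoc]
    rw [cancel2]
  have step2 : U * (Matrix.diagonal e * C) * star U
      = (U * Matrix.diagonal e * star U) * B := by
    rw [hCdef]
    simp only [Matrix.mul_assoc]
    rw [hU2, Matrix.mul_one]
  rw [hsqrt, ← step1, hCE, step2]

/-- The product of commuting PSD matrices is PSD. -/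
lemma aux_psd_mul {A B : Matrix n n ℂ} (hA : A.PosSemidef) (hB : B.PosSemidef)
    (h : B * A = A * B) : (A * B).PosSemidef := by
  have hs := aux_commute_sqrt hA h
  have key : hA.sqrt * B * hA.sqrt = A * B := by
    rw [Matrix.mul_assoc, hs, ← Matrix.mul_assoc, hA.sqrt_mul_self]
  have := hB.conjTranspose_mul_mul_same hA.sqrt
  rwa [hA.posSemidef_sqrt.1, key] at this

/-- Commuting passes to inverses. -/
lemma aux_commute_inv {A B : Matrix n n ℂ} (hA : IsUnit A.det)
    (h : B * A = A * B) : B * A⁻¹ = A⁻¹ * B := by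
  calc B * A⁻¹ = A⁻¹ * A * (B * A⁻¹) := by rw [Matrix.nonsing_inv_mul _ hA, Matrix.one_mul]
    _ = A⁻¹ * (A * B) * A⁻¹ := by simp only [Matrix.mul_assoc]
    _ = A⁻¹ * B * (A * A⁻¹) := by rw [← h]; simp only [Matrix.mul_assoc]
    _ = A⁻¹ * B := by rw [Matrix.mul_nonsing_inv _ hA, Matrix.mul_one]

lemma aux_smul_psd {P : Matrix n n ℂ} (hP : P.PosSemidef) {c : ℝ} (hc : 0 ≤ c) :
    ((c : ℂ) • P).PosSemidef := by
  refine ⟨?_, fun x => ?_⟩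
  · unfold Matrix.IsHermitian
    rw [Matrix.conjTranspose_smul, hP.1, Complex.star_def, Complex.conj_ofReal]
  · exact (hP.smul (by exact_mod_cast hc : (0 : ℂ) ≤ (c : ℂ))).2 x

end Aux

/-- With `S` Hermitian positive semidefinite, `c > 0`, and `τ` the unique
positive semidefinite square root of `(S + c I)⁻¹`: `S` and `τ` commute, `S τ` is Hermitian
positive semidefinite, and `S τ ⪯ S^{1/2}` in the Loewner order. -/
theorem stmt_11 (M : ℕ) (hM : 1 ≤ M)
    (S : Matrix (Fin M) (Fin M) ℂ) (hS : S.PosSemidef)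
    (c : ℝ) (hc : 0 < c)
    (τ : Matrix (Fin M) (Fin M) ℂ) (hτ : τ.PosSemidef)
    (hτsq : τ * τ = (S + (c : ℂ) • (1 : Matrix (Fin M) (Fin M) ℂ))⁻¹) :
    S * τ = τ * S ∧ (S * τ).PosSemidef ∧
      ∀ R : Matrix (Fin M) (Fin M) ℂ, R.PosSemidef → R * R = S →
        (R - S * τ).PosSemidef := by
  set A : Matrix (Fin M) (Fin M) ℂ := S + (c : ℂ) • 1 with hAdef
  have hcI : ((c : ℂ) • (1 : Matrix (Fin M) (Fin M) ℂ)).PosDef := by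
    rw [← Matrix.diagonal_one, ← Matrix.diagonal_smul]
    exact Matrix.PosDef.diagonal fun i => by
      simpa using Complex.zero_lt_real.mpr hc
  have hA : A.PosDef := Matrix.PosDef.posSemidef_add hS hcI
  have hAdet : IsUnit A.det := (Matrix.isUnit_iff_isUnit_det _).mp hA.isUnit
  have hAinv : (A⁻¹).PosDef := hA.inv
  have hAinvdet : IsUnit (A⁻¹).det := (Matrix.isUnit_iff_isUnit_det _).mp hAinv.isUnit
  -- τ commutes with A⁻¹, hence with A, hence with S
  have hτAinv : τ * A⁻¹ = A⁻¹ * τ := by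
    rw [← hτsq, ← Matrix.mul_assoc, Matrix.mul_assoc]
  have hτA : τ * A = A * τ := by
    have := aux_commute_inv hAinvdet hτAinv
    rwa [Matrix.nonsing_inv_nonsing_inv _ hAdet] at this
  have hSτ : S * τ = τ * S := by
    have h1 : τ * S + τ * ((c : ℂ) • 1) = S * τ + ((c : ℂ) • 1) * τ := by
      rw [← Matrix.mul_add, ← Matrix.add_mul, ← hAdef, hτA]
    have h2 : τ * ((c : ℂ) • 1) = ((c : ℂ) • 1) * τ := by
      rw [Matrix.smul_mul, Matrix.mul_smul, Matrix.mul_one, Matrix.one_mul]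
    rw [h2] at h1
    exact (add_right_cancel h1).symm
  refine ⟨hSτ, aux_psd_mul hS hτ hSτ.symm, ?_⟩
  · intro R hR hRR
    -- τ commutes with R since R is the sqrt of S
    have hRsqrt : R = hS.sqrt := hR.eq_sqrt_of_sq_eq hS (by rw [pow_two, hRR])
    set X : Matrix (Fin M) (Fin M) ℂ := R * τ with hXdef
    have hτR : τ * R = R * τ := by
      rw [hRsqrt]; exact aux_commute_sqrt hS hSτ.symm
    have hX : X.PosSemidef := aux_psd_mul hR hτ hτR
    have hXsq : X * X = 1 - (c : ℂ) • A⁻¹ := by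
      have h1 : X * X = S * A⁻¹ := by
        rw [hXdef, Matrix.mul_assoc, ← Matrix.mul_assoc τ R τ, hτR,
          Matrix.mul_assoc, hτsq, ← Matrix.mul_assoc, hRR]
      rw [h1]
      have h2 : S = A - (c : ℂ) • 1 := by rw [hAdef, add_sub_cancel_right]
      rw [h2, Matrix.sub_mul, Matrix.mul_nonsing_inv _ hAdet, Matrix.smul_mul,
        Matrix.one_mul]
    have h1mX2 : ((1 : Matrix (Fin M) (Fin M) ℂ) - X * X).PosSemidef := by
      rw [hXsq]
      have : (1 : Matrix (Fin M) (Fin M) ℂ) - (1 - (c : ℂ) • A⁻¹) = (c : ℂ) • A⁻¹ := sub_sub_cancel _ _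
      rw [this]
      exact aux_smul_psd hAinv.posSemidef hc.le
    have h1pX : ((1 : Matrix (Fin M) (Fin M) ℂ) + X).PosDef :=
      Matrix.PosDef.add_posSemidef Matrix.PosDef.one hX
    have h1pXdet : IsUnit ((1 : Matrix (Fin M) (Fin M) ℂ) + X).det :=
      (Matrix.isUnit_iff_isUnit_det _).mp h1pX.isUnit
    have hXinv : X * (1 + X)⁻¹ = (1 + X)⁻¹ * X :=
      aux_commute_inv h1pXdet (by noncomm_ring)
    have h1mX : ((1 : Matrix (Fin M) (Fin M) ℂ) - X).PosSemidef := by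
      have key : (1 : Matrix (Fin M) (Fin M) ℂ) - X = (1 + X)⁻¹ * (1 - X * X) := by
        have h' : ((1 : Matrix (Fin M) (Fin M) ℂ) + X) * (1 - X) = 1 - X * X := by noncomm_ring
        calc (1 : Matrix (Fin M) (Fin M) ℂ) - X
            = (1 + X)⁻¹ * ((1 + X) * (1 - X)) := by
              rw [← Matrix.mul_assoc, Matrix.nonsing_inv_mul _ h1pXdet, Matrix.one_mul]
          _ = (1 + X)⁻¹ * (1 - X * X) := by rw [h']
      rw [key]
      refine aux_psd_mul h1pX.inv.posSemidef h1mX2 ?_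
      refine aux_commute_inv h1pXdet ?_
      noncomm_ring
    -- R - S τ = R (1 - X) is a product of commuting PSD matrices
    have hXR : X * R = R * X := by
      rw [hXdef, Matrix.mul_assoc, ← hτR, ← Matrix.mul_assoc]
    have final : R - S * τ = R * (1 - X) := by
      rw [Matrix.mul_sub, Matrix.mul_one, hXdef, ← Matrix.mul_assoc, hRR]
    rw [final]
    refine aux_psd_mul hR h1mX ?_
    rw [Matrix.sub_mul, Matrix.mul_sub, Matrix.one_mul, Matrix.mul_one, hXR]
end
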